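/- Let E be a quasi-Banach function space on (0,∞) and let q ∈ (0,∞]. If E is an interpolation space for the couple (L_0, L_q), then there exists a constant c > 0 such that every linear operator T which is a contraction on (L_0, L_q) satisfies ‖T‖_{E→E} ≤ c. -/

import Mathlib

open MeasureTheory ENNReal Set Filter

noncomputable section

namespace CSZ

/-- Lebesgue measure on the half line `(0,∞)`. -/
def m0 : Measure ℝ := volume.restrict (Set.Ioi (0:ℝ))

/-- The right-continuous decreasing rearrangement `μ(t,f)` of a function on `(0,∞)`:
`μ(t,f) = inf {s ≥ 0 : m({|f| > s}) ≤ t}`. -/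
def mu (f : ℝ → ℝ) (t : ℝ) : ℝ :=
  sInf {s : ℝ | 0 ≤ s ∧ m0 {x | s < |f x|} ≤ ENNReal.ofReal t}

/-- Head majorization `g ≺≺_hd f` : `∫_0^t μ(s,g) ds ≤ ∫_0^t μ(s,f) ds` for all `t > 0`. -/
def HeadMaj (g f : ℝ → ℝ) : Prop :=
  ∀ t : ℝ, 0 < t →
    ∫⁻ s in Set.Ioc (0:ℝ) t, ENNReal.ofReal (mu g s) ≤
      ∫⁻ s in Set.Ioc (0:ℝ) t, ENNReal.ofReal (mu f s)

/-- Tail majorization `g ≺≺_tl f` : `∫_t^∞ μ(s,g) ds ≤ ∫_t^∞ μ(s,f) ds` for all `t > 0`. -/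
def TailMaj (g f : ℝ → ℝ) : Prop :=
  ∀ t : ℝ, 0 < t →
    ∫⁻ s in Set.Ioi t, ENNReal.ofReal (mu g s) ≤
      ∫⁻ s in Set.Ioi t, ENNReal.ofReal (mu f s)

/-- The space `L_p(0,∞)`, `0 < p < ∞`. -/
def LpS (p : ℝ) : Set (ℝ → ℝ) :=
  {f | Measurable f ∧ ∫⁻ x, ENNReal.ofReal (|f x| ^ p) ∂m0 < ⊤}

/-- The `L_p`-norm. -/
def LpNorm (p : ℝ) (f : ℝ → ℝ) : ℝ :=
  ((∫⁻ x, ENNReal.ofReal (|f x| ^ p) ∂m0) ^ (1/p)).toReal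

/-- The space `L_∞(0,∞)`. -/
def LinftyS : Set (ℝ → ℝ) :=
  {f | Measurable f ∧ ∃ C : ℝ, ∀ᵐ x ∂m0, |f x| ≤ C}

/-- The `L_∞`-norm (essential supremum). -/
def LinftyNorm (f : ℝ → ℝ) : ℝ :=
  (essSup (fun x => ENNReal.ofReal |f x|) m0).toReal

/-- The space `L_0(0,∞)` of measurable functions with support of finite measure. -/
def L0S : Set (ℝ → ℝ) :=
  {f | Measurable f ∧ m0 (Function.support f) < ⊤}

/-- The group "norm" on `L_0` : `‖f‖_0 = m(supp f)`. -/
def L0Norm (f : ℝ → ℝ) : ℝ := (m0 (Function.support f)).toReal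

/-- The sum `X + Y` of two sets of functions. -/
def sumSet (X Y : Set (ℝ → ℝ)) : Set (ℝ → ℝ) :=
  {f | ∃ g ∈ X, ∃ h ∈ Y, f = g + h}

/-- A quasi-Banach function space on `(0,∞)` : a linear space of measurable functions,
equipped with a complete quasi-norm, such that `f ∈ E`, `g` measurable and `|g| ≤ |f|`
imply `g ∈ E` and `‖g‖_E ≤ ‖f‖_E`. -/
structure QBFS where
  carrier : Set (ℝ → ℝ)
  qnorm : (ℝ → ℝ) → ℝ
  measurable_mem : ∀ f ∈ carrier, Measurable f
  zero_mem : (0 : ℝ → ℝ) ∈ carrier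
  add_mem : ∀ f ∈ carrier, ∀ g ∈ carrier, f + g ∈ carrier
  smul_mem : ∀ (c : ℝ), ∀ f ∈ carrier, c • f ∈ carrier
  qnorm_nonneg : ∀ f, 0 ≤ qnorm f
  qnorm_eq_zero : ∀ f ∈ carrier, qnorm f = 0 → f = 0
  qnorm_smul : ∀ (c : ℝ) (f : ℝ → ℝ), qnorm (c • f) = |c| * qnorm f
  quasi_triangle : ∃ C : ℝ, 1 ≤ C ∧ ∀ f g, qnorm (f + g) ≤ C * (qnorm f + qnorm g)
  ideal : ∀ f ∈ carrier, ∀ g : ℝ → ℝ, Measurable g →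
    (∀ x, |g x| ≤ |f x|) → g ∈ carrier ∧ qnorm g ≤ qnorm f
  complete : ∀ u : ℕ → ℝ → ℝ, (∀ n, u n ∈ carrier) →
    (∀ ε : ℝ, 0 < ε → ∃ N : ℕ, ∀ j ≥ N, ∀ k ≥ N, qnorm (u j - u k) < ε) →
    ∃ f ∈ carrier, ∀ ε : ℝ, 0 < ε → ∃ N : ℕ, ∀ n ≥ N, qnorm (u n - f) < ε

/-- `T` is linear on the subspace `S`. -/
def IsLinearOn (T : (ℝ → ℝ) → (ℝ → ℝ)) (S : Set (ℝ → ℝ)) : Prop :=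
  (∀ f ∈ S, ∀ g ∈ S, T (f + g) = T f + T g) ∧
  (∀ (c : ℝ), ∀ f ∈ S, T (c • f) = c • T f)

/-- `T` maps `X` into `X` with bound `M` for the (quasi-)norm `N`. -/
def BoundedWith (T : (ℝ → ℝ) → (ℝ → ℝ)) (X : Set (ℝ → ℝ)) (N : (ℝ → ℝ) → ℝ) (M : ℝ) :
    Prop :=
  ∀ f ∈ X, T f ∈ X ∧ N (T f) ≤ M * N f

/-- `T` maps `X` into `X` boundedly for the (quasi-)norm `N`. -/
def BoundedOn (T : (ℝ → ℝ) → (ℝ → ℝ)) (X : Set (ℝ → ℝ)) (N : (ℝ → ℝ) → ℝ) : Prop :=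
  ∃ M : ℝ, 0 ≤ M ∧ BoundedWith T X N M

/-- `(E, NE)` is an interpolation space for the couple `((X,NX), (Y,NY))` :
`X ∩ Y ⊆ E ⊆ X + Y` and every linear operator on `X + Y` which is bounded from `X` to `X`
and from `Y` to `Y` maps `E` into `E` boundedly. -/
def IsInterpolation (X Y : Set (ℝ → ℝ)) (NX NY : (ℝ → ℝ) → ℝ)
    (E : Set (ℝ → ℝ)) (NE : (ℝ → ℝ) → ℝ) : Prop :=
  X ∩ Y ⊆ E ∧ E ⊆ sumSet X Y ∧
  ∀ T : (ℝ → ℝ) → (ℝ → ℝ),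
    IsLinearOn T (sumSet X Y) →
    (∀ f ∈ sumSet X Y, T f ∈ sumSet X Y) →
    BoundedOn T X NX → BoundedOn T Y NY →
    BoundedOn T E NE

end CSZ

namespace CSZ

/-- The space `L_q` for `q ∈ (0,∞]` (with `L_∞` for `q = ∞`). -/
def LqS (q : ℝ≥0∞) : Set (ℝ → ℝ) := if q = ⊤ then LinftyS else LpS q.toReal

/-- The `L_q`-norm for `q ∈ (0,∞]`. -/
def LqNorm (q : ℝ≥0∞) : (ℝ → ℝ) → ℝ := if q = ⊤ then LinftyNorm else LpNorm q.toReal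

end CSZ

namespace CSZ6

open CSZ


def sn (n : ℕ) : ℝ := (2:ℝ)⁻¹ ^ (n+1)

lemma half_pos' : (0:ℝ) < (2:ℝ)⁻¹ := by norm_num
def tn (n : ℕ) : ℝ := 1 - (2:ℝ)⁻¹ ^ n

lemma sn_pos (n : ℕ) : 0 < sn n := pow_pos half_pos' _

lemma tn_nonneg (n : ℕ) : 0 ≤ tn n := by
  have : (2:ℝ)⁻¹ ^ n ≤ 1 := pow_le_one₀ (by norm_num) (by norm_num)
  simp only [tn]; linarith

lemma tn_lt_one (n : ℕ) : tn n < 1 := by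
  have : (0:ℝ) < (2:ℝ)⁻¹ ^ n := by positivity
  simp only [tn]; linarith

lemma tn_add_sn (n : ℕ) : tn n + sn n = tn (n+1) := by
  simp only [tn, sn, pow_succ]; ring

lemma tn_mono : Monotone tn := by
  apply monotone_nat_of_le_succ
  intro n
  have := sn_pos n
  rw [← tn_add_sn]; linarith

lemma idx_exists (y : ℝ) : ∃ n : ℕ, Int.fract y < tn (n+1) := by
  have hy := Int.fract_lt_one y
  obtain ⟨n, hn⟩ := exists_pow_lt_of_lt_one (x := 1 - Int.fract y) (y := (2:ℝ)⁻¹)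
    (by linarith) (by norm_num)
  refine ⟨n, ?_⟩
  have h2 : (2:ℝ)⁻¹ ^ (n+1) ≤ (2:ℝ)⁻¹ ^ n := by
    apply pow_le_pow_of_le_one (by norm_num) (by norm_num); omega
  simp only [tn]; linarith

def idx (y : ℝ) : ℕ := Nat.find (idx_exists y)

lemma idx_spec (y : ℝ) : tn (idx y) ≤ Int.fract y ∧ Int.fract y < tn (idx y + 1) := by
  constructor
  · rcases Nat.eq_zero_or_pos (idx y) with h | h
    · rw [h]; simpa [tn] using Int.fract_nonneg y
    · have := Nat.find_min (idx_exists y) (m := idx y - 1) (Nat.sub_lt h Nat.one_pos)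
      push_neg at this
      have heq : idx y - 1 + 1 = idx y := by omega
      rwa [heq] at this
  · exact Nat.find_spec (idx_exists y)

lemma idx_eq_iff {y : ℝ} {n : ℕ} :
    idx y = n ↔ (tn n ≤ Int.fract y ∧ Int.fract y < tn (n+1)) := by
  constructor
  · rintro rfl; exact idx_spec y
  · rintro ⟨h1, h2⟩
    rcases lt_trichotomy (idx y) n with h | h | h
    · exfalso
      have : tn (idx y + 1) ≤ tn n := tn_mono (by omega)
      have := (idx_spec y).2
      linarith
    · exact h
    · exfalso
      have : tn (n + 1) ≤ tn (idx y) := tn_mono (by omega)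
      have := (idx_spec y).1
      linarith

def en (n : ℕ) (x : ℝ) : ℝ := ⌊x⌋ + (tn n + sn n * Int.fract x)
def einv (n : ℕ) (y : ℝ) : ℝ := ⌊y⌋ + (Int.fract y - tn n) / sn n

lemma en_aux_mem (n : ℕ) {u : ℝ} (hu : u ∈ Ico (0:ℝ) 1) :
    tn n + sn n * u ∈ Ico (tn n) (tn (n+1)) := by
  constructor
  · nlinarith [sn_pos n, hu.1]
  · have := sn_pos n
    have : sn n * u < sn n := by nlinarith [hu.2]
    rw [← tn_add_sn]; linarith

lemma Ico_tn_subset (n : ℕ) : Ico (tn n) (tn (n+1)) ⊆ Ico (0:ℝ) 1 :=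
  fun u hu => ⟨le_trans (tn_nonneg n) hu.1, lt_trans hu.2 (tn_lt_one (n+1))⟩

lemma fract_en (n : ℕ) (x : ℝ) :
    Int.fract (en n x) = tn n + sn n * Int.fract x := by
  rw [en, Int.fract_intCast_add, Int.fract_eq_self.2
    (Ico_tn_subset n (en_aux_mem n ⟨Int.fract_nonneg x, Int.fract_lt_one x⟩))]

lemma floor_en (n : ℕ) (x : ℝ) : ⌊en n x⌋ = ⌊x⌋ := by
  rw [en, Int.floor_intCast_add]
  have := Ico_tn_subset n (en_aux_mem n ⟨Int.fract_nonneg x, Int.fract_lt_one x⟩)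
  rw [Int.floor_eq_zero_iff.2 this, add_zero]

lemma idx_en (n : ℕ) (x : ℝ) : idx (en n x) = n := by
  rw [idx_eq_iff, fract_en]
  exact en_aux_mem n ⟨Int.fract_nonneg x, Int.fract_lt_one x⟩

lemma einv_en (n : ℕ) (x : ℝ) : einv n (en n x) = x := by
  rw [einv, fract_en, floor_en]
  have h := (sn_pos n).ne'
  field_simp
  linear_combination (sn n) * Int.floor_add_fract x

lemma en_einv {n : ℕ} {y : ℝ} (h : idx y = n) : en n (einv n y) = y := by
  have hs := idx_eq_iff.1 h
  have hsn := sn_pos n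
  have hu : (Int.fract y - tn n) / sn n ∈ Ico (0:ℝ) 1 := by
    constructor
    · apply div_nonneg (by linarith [hs.1]) hsn.le
    · rw [div_lt_one hsn]
      have := hs.2; rw [← tn_add_sn] at this; linarith
  rw [en, einv, Int.fract_intCast_add, Int.floor_intCast_add,
    Int.fract_eq_self.2 hu, Int.floor_eq_zero_iff.2 hu]
  push_cast
  field_simp
  linear_combination Int.floor_add_fract y

lemma en_pos {n : ℕ} {x : ℝ} (hx : 0 < x) : 0 < en n x := by
  have hfl : (0:ℝ) ≤ ⌊x⌋ := by exact_mod_cast Int.floor_nonneg.2 hx.le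
  rcases eq_or_lt_of_le hfl with h | h
  · have hfr : Int.fract x = x := by
      rw [Int.fract, ← h, sub_zero]
    rw [en, ← h, hfr]
    have := sn_pos n; have := tn_nonneg n
    nlinarith
  · rw [en]
    have := tn_nonneg n
    nlinarith [sn_pos n, Int.fract_nonneg x]

lemma einv_nonneg {n : ℕ} {y : ℝ} (hy : 0 < y) (h : idx y = n) : 0 ≤ einv n y := by
  have hs := idx_eq_iff.1 h
  have hfl : (0:ℝ) ≤ ⌊y⌋ := by exact_mod_cast Int.floor_nonneg.2 hy.le
  rw [einv]
  have : 0 ≤ (Int.fract y - tn n) / sn n := div_nonneg (by linarith [hs.1]) (sn_pos n).le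
  linarith

lemma measurable_floorR : Measurable (fun x : ℝ => (⌊x⌋ : ℝ)) :=
  measurable_from_top.comp Int.measurable_floor

lemma measurable_en (n : ℕ) : Measurable (en n) := by
  unfold en
  exact measurable_floorR.add (measurable_const.add (measurable_fract.const_mul _))

lemma measurable_einv (n : ℕ) : Measurable (einv n) := by
  unfold einv
  exact measurable_floorR.add ((measurable_fract.sub measurable_const).div_const _)

lemma measurable_idx : Measurable idx := by
  apply measurable_to_countable'
  intro n
  have : idx ⁻¹' {n} = Int.fract ⁻¹' Ico (tn n) (tn (n+1)) := by
    ext y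
    rw [mem_preimage, mem_singleton_iff, idx_eq_iff, mem_preimage, mem_Ico]
  rw [this]
  exact measurable_fract measurableSet_Ico



def idxS (n : ℕ) : Set ℝ := idx ⁻¹' {n}

lemma measurableSet_idxS (n : ℕ) : MeasurableSet (idxS n) :=
  measurable_idx (measurableSet_singleton n)

lemma vol_affine_preimage {a : ℝ} (ha : a ≠ 0) (b : ℝ) (X : Set ℝ) :
    volume ((fun y => a * y + b) ⁻¹' X) = ENNReal.ofReal |a⁻¹| * volume X := by
  have h1 : (fun y : ℝ => a * y + b) ⁻¹' X = (a * ·) ⁻¹' ((fun z => z + b) ⁻¹' X) := rfl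
  rw [h1, Real.volume_preimage_mul_left ha, measure_preimage_add_right volume b X]

lemma vol_decomp (B : Set ℝ) (hB : MeasurableSet B) :
    volume B = ∑' k : ℤ, volume (B ∩ Ico (k:ℝ) (k+1)) := by
  have hcover : B = ⋃ k : ℤ, B ∩ Ico (k:ℝ) (k+1) := by
    ext y
    constructor
    · intro hy
      exact mem_iUnion.2 ⟨⌊y⌋, hy, Int.floor_le y, Int.lt_floor_add_one y⟩
    · rintro hy
      obtain ⟨k, hk, -⟩ := mem_iUnion.1 hy
      exact hk
  have hdisj : Pairwise (Function.onFun Disjoint fun k : ℤ => B ∩ Ico (k:ℝ) (k+1)) := by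
    intro k l hkl
    apply Disjoint.mono inter_subset_right inter_subset_right
    rw [Set.Ico_disjoint_Ico]
    rcases lt_or_gt_of_ne hkl with h | h
    · have h' : (k:ℝ) + 1 ≤ l := by exact_mod_cast h
      exact min_le_iff.mpr (Or.inl (le_max_iff.mpr (Or.inr h')))
    · have h' : (l:ℝ) + 1 ≤ k := by exact_mod_cast h
      exact min_le_iff.mpr (Or.inr (le_max_iff.mpr (Or.inl h')))
  have hmeas : ∀ k : ℤ, MeasurableSet (B ∩ Ico (k:ℝ) (k+1)) :=
    fun k => hB.inter measurableSet_Ico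
  have := measure_iUnion (μ := volume) hdisj hmeas
  rw [← hcover] at this
  exact this

lemma floor_eq_of_Ico {y : ℝ} {k : ℤ} (h : y ∈ Ico (k:ℝ) (k+1)) : ⌊y⌋ = k :=
  Int.floor_eq_iff.2 ⟨h.1, h.2⟩

lemma vol_idx_einv (n : ℕ) {A : Set ℝ} (hA : MeasurableSet A) :
    volume {y | idx y = n ∧ einv n y ∈ A} = ENNReal.ofReal (sn n) * volume A := by
  have hsn := sn_pos n
  set S := {y | idx y = n ∧ einv n y ∈ A} with hS
  have hSm : MeasurableSet S := by
    have : S = idxS n ∩ einv n ⁻¹' A := by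
      ext y; simp [hS, idxS, mem_preimage, mem_singleton_iff]
    rw [this]
    exact (measurableSet_idxS n).inter (measurable_einv n hA)
  rw [vol_decomp S hSm, vol_decomp A hA, ← ENNReal.tsum_mul_left]
  congr 1
  funext k
  -- the affine map on the k-th block
  set a : ℝ := (sn n)⁻¹ with ha
  set b : ℝ := (k : ℝ) - ((k:ℝ) + tn n) * (sn n)⁻¹ with hb
  have hform : ∀ y : ℝ, a * y + b = (k:ℝ) + (y - k - tn n) / sn n := by
    intro y; rw [ha, hb]; field_simp; ring
  have key : S ∩ Ico (k:ℝ) (k+1) = (fun y => a * y + b) ⁻¹' (A ∩ Ico (k:ℝ) (k+1)) := by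
    ext y
    simp only [hS, mem_inter_iff, mem_setOf_eq, mem_preimage, mem_Ico]
    constructor
    · rintro ⟨⟨hidx, hyA⟩, hyI⟩
      have hfl : ⌊y⌋ = k := floor_eq_of_Ico ⟨hyI.1, hyI.2⟩
      have hfr : Int.fract y = y - k := by rw [Int.fract, hfl]
      have hrange := idx_eq_iff.1 hidx
      rw [hfr] at hrange
      have heinv : einv n y = a * y + b := by
        rw [einv, hfl, hfr, hform y]
      have h1 : 0 ≤ (y - k - tn n) / sn n := div_nonneg (by linarith [hrange.1]) hsn.le
      have h2 : (y - k - tn n) / sn n < 1 := by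
        rw [div_lt_one hsn]
        have := hrange.2; rw [← tn_add_sn] at this; linarith
      refine ⟨heinv ▸ hyA, ?_, ?_⟩ <;> rw [hform y] <;> linarith
    · rintro ⟨hyA, hylo, hyhi⟩
      rw [hform y] at hyA hylo hyhi
      have h1 : 0 ≤ (y - k - tn n) / sn n := by linarith
      have h2 : (y - k - tn n) / sn n < 1 := by linarith
      rw [div_lt_one hsn] at h2
      have h1' : 0 ≤ y - k - tn n := by
        by_contra hcon
        push_neg at hcon
        have : (y - k - tn n) / sn n < 0 := div_neg_of_neg_of_pos hcon hsn
        linarith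
      have hyI : y ∈ Ico (k:ℝ) (k+1) := by
        constructor
        · have := tn_nonneg n; linarith
        · have h4 : tn n + sn n < 1 := by rw [tn_add_sn]; exact tn_lt_one _
          linarith
      have hfl : ⌊y⌋ = k := floor_eq_of_Ico hyI
      have hfr : Int.fract y = y - k := by rw [Int.fract, hfl]
      have hidx : idx y = n := by
        rw [idx_eq_iff, hfr]
        refine ⟨by linarith, ?_⟩
        rw [← tn_add_sn]; linarith
      have heinv : einv n y ∈ A := by
        have : einv n y = (k:ℝ) + (y - k - tn n) / sn n := by
          rw [einv, hfl, hfr]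
        rw [this]; exact hyA
      exact ⟨⟨hidx, heinv⟩, hyI.1, hyI.2⟩
  rw [key, vol_affine_preimage (by positivity) b (A ∩ Ico (k:ℝ) (k+1))]
  congr 2
  rw [ha, inv_inv, abs_of_pos hsn]

lemma map_einv (n : ℕ) :
    Measure.map (einv n) (volume.restrict (idxS n)) = ENNReal.ofReal (sn n) • volume := by
  ext A hA
  rw [Measure.map_apply (measurable_einv n) hA,
    Measure.restrict_apply (measurable_einv n hA), Measure.smul_apply, smul_eq_mul]
  rw [← vol_idx_einv n hA]
  congr 1
  ext y
  simp [idxS, mem_preimage, mem_singleton_iff, and_comm]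

lemma lint_idxS (n : ℕ) {G : ℝ → ℝ≥0∞} (hG : Measurable G) :
    ∫⁻ y in idxS n, G (einv n y) = ENNReal.ofReal (sn n) * ∫⁻ u, G u := by
  rw [← lintegral_map hG (measurable_einv n), map_einv, lintegral_smul_measure, smul_eq_mul]

lemma vol_idx_inter (n : ℕ) {B : Set ℝ} (hB : MeasurableSet B) :
    volume (idxS n ∩ B) = ENNReal.ofReal (sn n) * volume (en n ⁻¹' B) := by
  rw [← vol_idx_einv n (measurable_en n hB)]
  congr 1
  ext y
  simp only [mem_inter_iff, idxS, mem_preimage, mem_singleton_iff, mem_setOf_eq]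
  constructor
  · rintro ⟨h1, h2⟩
    exact ⟨h1, show en n (einv n y) ∈ B by rwa [en_einv h1]⟩
  · rintro ⟨h1, h2⟩
    have h2' : en n (einv n y) ∈ B := h2
    rw [en_einv h1] at h2'
    exact ⟨h1, h2'⟩

lemma vol_en_preimage_le (n : ℕ) {B : Set ℝ} (hB : MeasurableSet B) :
    volume (en n ⁻¹' B) ≤ (ENNReal.ofReal (sn n))⁻¹ * volume B := by
  have h0 : ENNReal.ofReal (sn n) ≠ 0 := (ENNReal.ofReal_pos.2 (sn_pos n)).ne'
  calc volume (en n ⁻¹' B)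
      = (ENNReal.ofReal (sn n))⁻¹ * (ENNReal.ofReal (sn n) * volume (en n ⁻¹' B)) := by
        rw [← mul_assoc, ENNReal.inv_mul_cancel h0 ENNReal.ofReal_ne_top, one_mul]
    _ = (ENNReal.ofReal (sn n))⁻¹ * volume (idxS n ∩ B) := by rw [vol_idx_inter n hB]
    _ ≤ (ENNReal.ofReal (sn n))⁻¹ * volume B :=
        mul_le_mul_right (measure_mono inter_subset_right) _

lemma map_en_le (n : ℕ) :
    Measure.map (en n) volume ≤ (ENNReal.ofReal (sn n))⁻¹ • volume := by
  refine Measure.le_iff.2 fun B hB => ?_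
  rw [Measure.map_apply (measurable_en n) hB, Measure.smul_apply, smul_eq_mul]
  exact vol_en_preimage_le n hB

lemma lint_en_le (n : ℕ) {G : ℝ → ℝ≥0∞} (hG : Measurable G) :
    ∫⁻ x, G (en n x) ≤ (ENNReal.ofReal (sn n))⁻¹ * ∫⁻ u, G u := by
  rw [← lintegral_map hG (measurable_en n)]
  calc ∫⁻ y, G y ∂(Measure.map (en n) volume)
      ≤ ∫⁻ y, G y ∂((ENNReal.ofReal (sn n))⁻¹ • volume) := lintegral_mono' (map_en_le n) le_rfl
    _ = (ENNReal.ofReal (sn n))⁻¹ * ∫⁻ u, G u := lintegral_smul_measure _ _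

lemma tsum_sn : ∑' n : ℕ, ENNReal.ofReal (sn n) = 1 := by
  have h1 : ∀ n : ℕ, ENNReal.ofReal (sn n) = (2:ℝ≥0∞)⁻¹ ^ (n+1) := by
    intro n
    rw [sn, ENNReal.ofReal_pow (by norm_num)]
    congr 1
    rw [ENNReal.ofReal_inv_of_pos (by norm_num)]
    norm_num
  simp_rw [h1]
  rw [ENNReal.tsum_geometric_add_one, ENNReal.one_sub_inv_two, inv_inv,
    ENNReal.inv_mul_cancel two_ne_zero ENNReal.ofNat_ne_top]


lemma measurableSet_supp {f : ℝ → ℝ} (hf : Measurable f) :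
    MeasurableSet (Function.support f) := by
  have : Function.support f = f ⁻¹' {0}ᶜ := by
    ext x; simp [Function.mem_support]
  rw [this]
  exact hf (measurableSet_singleton 0).compl

lemma m0_apply (X : Set ℝ) : m0 X = volume (X ∩ Ioi 0) :=
  Measure.restrict_apply' measurableSet_Ioi

lemma vol_inter_Ici (S : Set ℝ) : volume (S ∩ Ici (0:ℝ)) = volume (S ∩ Ioi 0) := by
  apply le_antisymm
  · calc volume (S ∩ Ici (0:ℝ)) ≤ volume ((S ∩ Ioi 0) ∪ {0}) := by
          apply measure_mono
          rintro x ⟨hS, hx⟩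
          rcases eq_or_lt_of_le (mem_Ici.1 hx) with h | h
          · exact Or.inr (by simp [← h])
          · exact Or.inl ⟨hS, h⟩
      _ ≤ volume (S ∩ Ioi 0) + volume {0} := measure_union_le _ _
      _ = volume (S ∩ Ioi 0) := by simp
  · exact measure_mono (inter_subset_inter_right _ Ioi_subset_Ici_self)

/-- The glued operator. -/
def Tgen (Ts : ℕ → (ℝ → ℝ) → ℝ → ℝ) (f : ℝ → ℝ) : ℝ → ℝ :=
  fun y => Ts (idx y) f (einv (idx y) y)

/-- The extraction operators. -/
def Rop (n : ℕ) (h : ℝ → ℝ) : ℝ → ℝ := fun x => h (en n x)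

lemma Rop_Tgen (Ts : ℕ → (ℝ → ℝ) → ℝ → ℝ) (f : ℝ → ℝ) (n : ℕ) :
    Rop n (Tgen Ts f) = Ts n f := by
  funext x
  simp only [Rop, Tgen, idx_en, einv_en]

lemma measurable_Tgen {Ts : ℕ → (ℝ → ℝ) → ℝ → ℝ} {f : ℝ → ℝ}
    (h : ∀ n, Measurable (Ts n f)) : Measurable (Tgen Ts f) := by
  intro t ht
  have : Tgen Ts f ⁻¹' t = ⋃ n, idxS n ∩ (fun y => Ts n f (einv n y)) ⁻¹' t := by
    ext y
    simp only [mem_preimage, mem_iUnion, mem_inter_iff, idxS, mem_singleton_iff]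
    constructor
    · intro hy; exact ⟨idx y, rfl, hy⟩
    · rintro ⟨n, hn, hy⟩
      subst hn
      exact hy
  rw [this]
  exact MeasurableSet.iUnion fun n =>
    (measurableSet_idxS n).inter (((h n).comp (measurable_einv n)) ht)

lemma measurable_Rop {h : ℝ → ℝ} (hh : Measurable h) (n : ℕ) : Measurable (Rop n h) :=
  hh.comp (measurable_en n)

/-- Support estimate for the glued operator. -/
lemma m0_supp_Tgen {Ts : ℕ → (ℝ → ℝ) → ℝ → ℝ} {f : ℝ → ℝ}
    (h : ∀ n, Measurable (Ts n f)) :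
    m0 (Function.support (Tgen Ts f)) ≤
      ∑' n, ENNReal.ofReal (sn n) * m0 (Function.support (Ts n f)) := by
  rw [m0_apply]
  have hsub : Function.support (Tgen Ts f) ∩ Ioi 0 ⊆
      ⋃ n, {y | idx y = n ∧ einv n y ∈ Function.support (Ts n f) ∩ Ici 0} := by
    rintro y ⟨hy, hy0⟩
    refine mem_iUnion.2 ⟨idx y, rfl, hy, einv_nonneg hy0 rfl⟩
  calc volume (Function.support (Tgen Ts f) ∩ Ioi 0)
      ≤ volume (⋃ n, {y | idx y = n ∧ einv n y ∈ Function.support (Ts n f) ∩ Ici 0}) :=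
        measure_mono hsub
    _ ≤ ∑' n, volume {y | idx y = n ∧ einv n y ∈ Function.support (Ts n f) ∩ Ici 0} :=
        measure_iUnion_le _
    _ = ∑' n, ENNReal.ofReal (sn n) * m0 (Function.support (Ts n f)) := by
        congr 1
        funext n
        rw [vol_idx_einv n ((measurableSet_supp (h n)).inter measurableSet_Ici),
          vol_inter_Ici, m0_apply]

/-- A.e. transport for the glued operator. -/
lemma ae_Tgen {P : ℕ → ℝ → Prop}
    (h : ∀ n, ∀ᵐ x ∂m0, P n x) :
    ∀ᵐ y ∂m0, P (idx y) (einv (idx y) y) := by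
  have hM : ∀ n, ∃ M : Set ℝ, {x | ¬ P n x} ⊆ M ∧ MeasurableSet M ∧ m0 M = 0 := by
    intro n
    exact exists_measurable_superset_of_null (by simpa [ae_iff] using h n)
  choose M hMsub hMm hM0 using hM
  rw [ae_iff]
  apply le_antisymm _ zero_le
  rw [m0_apply]
  have hsub : {y | ¬ P (idx y) (einv (idx y) y)} ∩ Ioi 0 ⊆
      ⋃ n, {y | idx y = n ∧ einv n y ∈ M n ∩ Ici 0} := by
    rintro y ⟨hy, hy0⟩
    exact mem_iUnion.2 ⟨idx y, rfl, hMsub _ hy, einv_nonneg hy0 rfl⟩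
  calc volume ({y | ¬ P (idx y) (einv (idx y) y)} ∩ Ioi 0)
      ≤ ∑' n, volume {y | idx y = n ∧ einv n y ∈ M n ∩ Ici 0} :=
        (measure_mono hsub).trans (measure_iUnion_le _)
    _ = ∑' n, ENNReal.ofReal (sn n) * volume (M n ∩ Ici 0) := by
        congr 1; funext n
        rw [vol_idx_einv n ((hMm n).inter measurableSet_Ici)]
    _ = 0 := by
        simp only [ENNReal.tsum_eq_zero]
        intro n
        rw [vol_inter_Ici, ← m0_apply, hM0 n, mul_zero]

/-- Lintegral estimate for the glued operator. -/
lemma lint_Tgen {Ts : ℕ → (ℝ → ℝ) → ℝ → ℝ} {f : ℝ → ℝ}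
    (h : ∀ n, Measurable (Ts n f)) (p : ℝ) :
    ∫⁻ y, ENNReal.ofReal (|Tgen Ts f y| ^ p) ∂m0 ≤
      ∑' n, ENNReal.ofReal (sn n) * ∫⁻ x, ENNReal.ofReal (|Ts n f x| ^ p) ∂m0 := by
  have hcover : Ioi (0:ℝ) = ⋃ n, Ioi 0 ∩ idxS n := by
    ext y
    simp only [mem_iUnion, mem_inter_iff, idxS, mem_preimage, mem_singleton_iff]
    exact ⟨fun hy => ⟨idx y, hy, rfl⟩, fun ⟨n, hy, _⟩ => hy⟩
  have hdisj : Pairwise (Function.onFun Disjoint fun n => Ioi (0:ℝ) ∩ idxS n) := by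
    intro m n hmn
    apply Disjoint.mono inter_subset_right inter_subset_right
    apply disjoint_left.2
    intro y hym hyn
    simp only [idxS, mem_preimage, mem_singleton_iff] at hym hyn
    exact hmn (hym ▸ hyn.symm ▸ rfl)
  have hmeas : ∀ n, MeasurableSet (Ioi (0:ℝ) ∩ idxS n) :=
    fun n => measurableSet_Ioi.inter (measurableSet_idxS n)
  show ∫⁻ y in Ioi 0, ENNReal.ofReal (|Tgen Ts f y| ^ p) ≤ _
  rw [hcover, lintegral_iUnion hmeas hdisj]
  apply ENNReal.tsum_le_tsum
  intro n
  set Gn : ℝ → ℝ≥0∞ := (Ici (0:ℝ)).indicator (fun u => ENNReal.ofReal (|Ts n f u| ^ p)) with hGn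
  have hGnm : Measurable Gn :=
    (measurable_ofReal.comp ((h n).abs.pow_const p)).indicator measurableSet_Ici
  have step1 : ∫⁻ y in Ioi 0 ∩ idxS n, ENNReal.ofReal (|Tgen Ts f y| ^ p) =
      ∫⁻ y in Ioi 0 ∩ idxS n, Gn (einv n y) := by
    apply setLIntegral_congr_fun (hmeas n)
    intro y hy
    have hidx : idx y = n := hy.2
    have hnn : einv n y ∈ Ici (0:ℝ) := einv_nonneg hy.1 hidx
    rw [hGn]
    simp only [indicator_of_mem hnn, Tgen, hidx]
  rw [step1]
  calc ∫⁻ y in Ioi 0 ∩ idxS n, Gn (einv n y)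
      ≤ ∫⁻ y in idxS n, Gn (einv n y) := lintegral_mono_set inter_subset_right
    _ = ENNReal.ofReal (sn n) * ∫⁻ u, Gn u := lint_idxS n hGnm
    _ = ENNReal.ofReal (sn n) * ∫⁻ x, ENNReal.ofReal (|Ts n f x| ^ p) ∂m0 := by
        congr 1
        rw [hGn, lintegral_indicator measurableSet_Ici]
        show ∫⁻ u in Ici (0:ℝ), ENNReal.ofReal (|Ts n f u| ^ p) = ∫⁻ x in Ioi 0, _
        rw [← MeasureTheory.setLIntegral_congr (Ioi_ae_eq_Ici (μ := volume) (a := (0:ℝ)))]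

/-- Support estimate for the extraction operators. -/
lemma m0_supp_Rop {h : ℝ → ℝ} (hh : Measurable h) (n : ℕ) :
    m0 (Function.support (Rop n h)) ≤
      (ENNReal.ofReal (sn n))⁻¹ * m0 (Function.support h) := by
  rw [m0_apply, m0_apply]
  have hsub : Function.support (Rop n h) ∩ Ioi 0 ⊆
      en n ⁻¹' (Function.support h ∩ Ioi 0) := by
    rintro x ⟨hx, hx0⟩
    exact ⟨hx, en_pos hx0⟩
  calc volume (Function.support (Rop n h) ∩ Ioi 0)
      ≤ volume (en n ⁻¹' (Function.support h ∩ Ioi 0)) := measure_mono hsub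
    _ ≤ (ENNReal.ofReal (sn n))⁻¹ * volume (Function.support h ∩ Ioi 0) :=
        vol_en_preimage_le n ((measurableSet_supp hh).inter measurableSet_Ioi)

/-- Lintegral estimate for the extraction operators. -/
lemma lint_Rop {h : ℝ → ℝ} (hh : Measurable h) (n : ℕ) (p : ℝ) :
    ∫⁻ x, ENNReal.ofReal (|Rop n h x| ^ p) ∂m0 ≤
      (ENNReal.ofReal (sn n))⁻¹ * ∫⁻ u, ENNReal.ofReal (|h u| ^ p) ∂m0 := by
  set G : ℝ → ℝ≥0∞ := (Ioi (0:ℝ)).indicator (fun u => ENNReal.ofReal (|h u| ^ p)) with hG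
  have hGm : Measurable G :=
    (measurable_ofReal.comp (hh.abs.pow_const p)).indicator measurableSet_Ioi
  have step1 : ∫⁻ x, ENNReal.ofReal (|Rop n h x| ^ p) ∂m0 ≤ ∫⁻ x, G (en n x) := by
    rw [m0]
    calc ∫⁻ x in Ioi 0, ENNReal.ofReal (|Rop n h x| ^ p)
        = ∫⁻ x in Ioi 0, G (en n x) := by
          apply setLIntegral_congr_fun measurableSet_Ioi
          intro x hx
          rw [hG]
          simp only [indicator_of_mem (mem_Ioi.2 (en_pos hx)), Rop]
      _ ≤ ∫⁻ x, G (en n x) := setLIntegral_le_lintegral _ _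
  calc ∫⁻ x, ENNReal.ofReal (|Rop n h x| ^ p) ∂m0
      ≤ ∫⁻ x, G (en n x) := step1
    _ ≤ (ENNReal.ofReal (sn n))⁻¹ * ∫⁻ u, G u := lint_en_le n hGm
    _ = (ENNReal.ofReal (sn n))⁻¹ * ∫⁻ u, ENNReal.ofReal (|h u| ^ p) ∂m0 := by
        congr 1
        rw [hG, lintegral_indicator measurableSet_Ioi, m0]

/-- A.e. transport for the extraction operators. -/
lemma ae_Rop {P : ℝ → Prop} (h : ∀ᵐ x ∂m0, P x) (n : ℕ) :
    ∀ᵐ x ∂m0, P (en n x) := by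
  obtain ⟨M, hsub, hMm, hM0⟩ :=
    exists_measurable_superset_of_null (μ := m0) (s := {x | ¬ P x}) (by simpa [ae_iff] using h)
  rw [ae_iff]
  apply le_antisymm _ zero_le
  rw [m0_apply]
  have hsub2 : {x | ¬ P (en n x)} ∩ Ioi 0 ⊆ en n ⁻¹' (M ∩ Ioi 0) := by
    rintro x ⟨hx, hx0⟩
    exact ⟨hsub hx, en_pos hx0⟩
  calc volume ({x | ¬ P (en n x)} ∩ Ioi 0)
      ≤ volume (en n ⁻¹' (M ∩ Ioi 0)) := measure_mono hsub2
    _ ≤ (ENNReal.ofReal (sn n))⁻¹ * volume (M ∩ Ioi 0) :=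
        vol_en_preimage_le n (hMm.inter measurableSet_Ioi)
    _ = 0 := by rw [← m0_apply, hM0, mul_zero]



/-! ### Space-level lemmas -/

lemma zero_mem_L0S : (0:ℝ→ℝ) ∈ L0S := by
  refine ⟨measurable_const, ?_⟩
  rw [Function.support_zero]
  simp

lemma zero_mem_LinftyS : (0:ℝ→ℝ) ∈ LinftyS :=
  ⟨measurable_const, 0, ae_of_all _ fun x => by simp⟩

lemma zero_mem_LpS {p : ℝ} (hp : 0 < p) : (0:ℝ→ℝ) ∈ LpS p := by
  refine ⟨measurable_const, ?_⟩
  have : ∀ x : ℝ, ENNReal.ofReal (|(0:ℝ→ℝ) x| ^ p) = 0 := by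
    intro x
    simp [Real.zero_rpow hp.ne']
  simp only [this, lintegral_zero]
  exact ENNReal.zero_lt_top

lemma zero_mem_LqS {q : ℝ≥0∞} (hq : 0 < q) : (0:ℝ→ℝ) ∈ LqS q := by
  rcases eq_or_ne q ⊤ with h | h
  · rw [LqS, if_pos h]; exact zero_mem_LinftyS
  · rw [LqS, if_neg h]
    exact zero_mem_LpS (ENNReal.toReal_pos hq.ne' h)

lemma LqS_measurable {q : ℝ≥0∞} {f : ℝ → ℝ} (hf : f ∈ LqS q) : Measurable f := by
  rcases eq_or_ne q ⊤ with h | h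
  · rw [LqS, if_pos h] at hf; exact hf.1
  · rw [LqS, if_neg h] at hf; exact hf.1

lemma mem_sumSet_measurable {q : ℝ≥0∞} {f : ℝ → ℝ}
    (hf : f ∈ sumSet L0S (LqS q)) : Measurable f := by
  obtain ⟨g, hg, h, hh, rfl⟩ := hf
  exact hg.1.add (LqS_measurable hh)

lemma L0S_subset_sumSet {q : ℝ≥0∞} (hq : 0 < q) : L0S ⊆ sumSet L0S (LqS q) :=
  fun f hf => ⟨f, hf, 0, zero_mem_LqS hq, by simp⟩

lemma LqS_subset_sumSet {q : ℝ≥0∞} : LqS q ⊆ sumSet L0S (LqS q) :=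
  fun f hf => ⟨0, zero_mem_L0S, f, hf, by simp⟩

/-- Conversion: norm inequality to integral inequality in `L_p`. -/
lemma lp_int_le_int {p : ℝ} (hp : 0 < p) {f g : ℝ → ℝ} (hf : f ∈ LpS p) (hg : g ∈ LpS p)
    (h : LpNorm p g ≤ LpNorm p f) :
    ∫⁻ x, ENNReal.ofReal (|g x| ^ p) ∂m0 ≤ ∫⁻ x, ENNReal.ofReal (|f x| ^ p) ∂m0 := by
  set Ig := ∫⁻ x, ENNReal.ofReal (|g x| ^ p) ∂m0 with hIg
  set If := ∫⁻ x, ENNReal.ofReal (|f x| ^ p) ∂m0 with hIf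
  have h1 : Ig ^ (1/p) ≤ If ^ (1/p) := by
    rw [← ENNReal.toReal_le_toReal (ENNReal.rpow_ne_top_of_nonneg (by positivity) hg.2.ne)
      (ENNReal.rpow_ne_top_of_nonneg (by positivity) hf.2.ne)]
    exact h
  calc Ig = (Ig ^ (1/p)) ^ p := by
        rw [← ENNReal.rpow_mul, one_div_mul_cancel hp.ne', ENNReal.rpow_one]
    _ ≤ (If ^ (1/p)) ^ p := ENNReal.rpow_le_rpow h1 hp.le
    _ = If := by rw [← ENNReal.rpow_mul, one_div_mul_cancel hp.ne', ENNReal.rpow_one]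

/-- Conversion: integral inequality to norm inequality in `L_p`. -/
lemma lp_norm_le_norm {p : ℝ} (hp : 0 < p) {f g : ℝ → ℝ}
    (hfin : ∫⁻ x, ENNReal.ofReal (|f x| ^ p) ∂m0 ≠ ⊤)
    (h : ∫⁻ x, ENNReal.ofReal (|g x| ^ p) ∂m0 ≤ ∫⁻ x, ENNReal.ofReal (|f x| ^ p) ∂m0) :
    LpNorm p g ≤ LpNorm p f := by
  rw [LpNorm, LpNorm]
  apply ENNReal.toReal_mono (ENNReal.rpow_ne_top_of_nonneg (by positivity) hfin)
  exact ENNReal.rpow_le_rpow h (by positivity)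

/-- `L_∞` members are a.e. bounded by their norm. -/
lemma linfty_ae_bound {f : ℝ → ℝ} (hf : f ∈ LinftyS) :
    ∀ᵐ x ∂m0, |f x| ≤ LinftyNorm f := by
  obtain ⟨-, C, hC⟩ := hf
  have hess : essSup (fun x => ENNReal.ofReal |f x|) m0 ≤ ENNReal.ofReal (max C 0) := by
    refine essSup_le_of_ae_le _ ?_
    filter_upwards [hC] with x hx
    exact ENNReal.ofReal_le_ofReal (le_max_of_le_left hx)
  have hne : essSup (fun x => ENNReal.ofReal |f x|) m0 ≠ ⊤ :=
    (lt_of_le_of_lt hess ENNReal.ofReal_lt_top).ne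
  filter_upwards [ae_le_essSup (fun x => ENNReal.ofReal |f x|)] with x hx
  rw [LinftyNorm]
  calc |f x| = (ENNReal.ofReal |f x|).toReal := by
        rw [ENNReal.toReal_ofReal (abs_nonneg _)]
    _ ≤ (essSup (fun x => ENNReal.ofReal |f x|) m0).toReal := ENNReal.toReal_mono hne hx

lemma linfty_norm_le {f : ℝ → ℝ} {B : ℝ} (hB : 0 ≤ B)
    (h : ∀ᵐ x ∂m0, |f x| ≤ B) : LinftyNorm f ≤ B := by
  rw [LinftyNorm]
  have hess : essSup (fun x => ENNReal.ofReal |f x|) m0 ≤ ENNReal.ofReal B := by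
    refine essSup_le_of_ae_le _ ?_
    filter_upwards [h] with x hx
    exact ENNReal.ofReal_le_ofReal hx
  calc (essSup (fun x => ENNReal.ofReal |f x|) m0).toReal
      ≤ (ENNReal.ofReal B).toReal := ENNReal.toReal_mono ENNReal.ofReal_ne_top hess
    _ = B := ENNReal.toReal_ofReal hB

/-! ### Boundedness of the glued and extraction operators -/

lemma Tgen_bounded_L0 {Ts : ℕ → (ℝ → ℝ) → ℝ → ℝ}
    (hTs : ∀ n, BoundedWith (Ts n) L0S L0Norm 1) :
    BoundedWith (Tgen Ts) L0S L0Norm 1 := by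
  intro f hf
  have hmem : ∀ n, Ts n f ∈ L0S ∧ L0Norm (Ts n f) ≤ 1 * L0Norm f := fun n => hTs n f hf
  have hmeas : ∀ n, Measurable (Ts n f) := fun n => (hmem n).1.1
  have hterm : ∀ n, m0 (Function.support (Ts n f)) ≤ m0 (Function.support f) := by
    intro n
    have h1 := (hmem n).2
    rw [one_mul] at h1
    exact (ENNReal.toReal_le_toReal (hmem n).1.2.ne hf.2.ne).1 h1
  have hkey : m0 (Function.support (Tgen Ts f)) ≤ m0 (Function.support f) := by
    calc m0 (Function.support (Tgen Ts f))
        ≤ ∑' n, ENNReal.ofReal (sn n) * m0 (Function.support (Ts n f)) := m0_supp_Tgen hmeas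
      _ ≤ ∑' n, ENNReal.ofReal (sn n) * m0 (Function.support f) :=
          ENNReal.tsum_le_tsum fun n => mul_le_mul_right (hterm n) _
      _ = m0 (Function.support f) := by rw [ENNReal.tsum_mul_right, tsum_sn, one_mul]
  refine ⟨⟨measurable_Tgen hmeas, lt_of_le_of_lt hkey hf.2⟩, ?_⟩
  rw [one_mul]
  exact ENNReal.toReal_mono hf.2.ne hkey

lemma Tgen_bounded_Lp {p : ℝ} (hp : 0 < p) {Ts : ℕ → (ℝ → ℝ) → ℝ → ℝ}
    (hTs : ∀ n, BoundedWith (Ts n) (LpS p) (LpNorm p) 1) :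
    BoundedWith (Tgen Ts) (LpS p) (LpNorm p) 1 := by
  intro f hf
  have hmem : ∀ n, Ts n f ∈ LpS p ∧ LpNorm p (Ts n f) ≤ 1 * LpNorm p f := fun n => hTs n f hf
  have hmeas : ∀ n, Measurable (Ts n f) := fun n => (hmem n).1.1
  have hterm : ∀ n, ∫⁻ x, ENNReal.ofReal (|Ts n f x| ^ p) ∂m0 ≤
      ∫⁻ x, ENNReal.ofReal (|f x| ^ p) ∂m0 := by
    intro n
    have h1 := (hmem n).2
    rw [one_mul] at h1
    exact lp_int_le_int hp hf (hmem n).1 h1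
  have hkey : ∫⁻ y, ENNReal.ofReal (|Tgen Ts f y| ^ p) ∂m0 ≤
      ∫⁻ x, ENNReal.ofReal (|f x| ^ p) ∂m0 := by
    calc ∫⁻ y, ENNReal.ofReal (|Tgen Ts f y| ^ p) ∂m0
        ≤ ∑' n, ENNReal.ofReal (sn n) * ∫⁻ x, ENNReal.ofReal (|Ts n f x| ^ p) ∂m0 :=
          lint_Tgen hmeas p
      _ ≤ ∑' n, ENNReal.ofReal (sn n) * ∫⁻ x, ENNReal.ofReal (|f x| ^ p) ∂m0 :=
          ENNReal.tsum_le_tsum fun n => mul_le_mul_right (hterm n) _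
      _ = ∫⁻ x, ENNReal.ofReal (|f x| ^ p) ∂m0 := by
          rw [ENNReal.tsum_mul_right, tsum_sn, one_mul]
  refine ⟨⟨measurable_Tgen hmeas, lt_of_le_of_lt hkey hf.2⟩, ?_⟩
  rw [one_mul]
  exact lp_norm_le_norm hp hf.2.ne hkey

lemma Tgen_bounded_Linfty {Ts : ℕ → (ℝ → ℝ) → ℝ → ℝ}
    (hTs : ∀ n, BoundedWith (Ts n) LinftyS LinftyNorm 1) :
    BoundedWith (Tgen Ts) LinftyS LinftyNorm 1 := by
  intro f hf
  set B := LinftyNorm f with hBdef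
  have hB : 0 ≤ B := ENNReal.toReal_nonneg
  have hae : ∀ n, ∀ᵐ x ∂m0, |Ts n f x| ≤ B := by
    intro n
    have h2 := (hTs n f hf).2
    rw [one_mul] at h2
    filter_upwards [linfty_ae_bound (hTs n f hf).1] with x hx using hx.trans h2
  have hTf : ∀ᵐ y ∂m0, |Tgen Ts f y| ≤ B :=
    ae_Tgen (P := fun n x => |Ts n f x| ≤ B) hae
  refine ⟨⟨measurable_Tgen (fun n => (hTs n f hf).1.1), B, hTf⟩, ?_⟩
  rw [one_mul]
  exact linfty_norm_le hB hTf

lemma Rop_bounded_L0 (n : ℕ) : BoundedWith (Rop n) L0S L0Norm ((sn n)⁻¹) := by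
  intro h hh
  have hkey : m0 (Function.support (Rop n h)) ≤
      ENNReal.ofReal ((sn n)⁻¹) * m0 (Function.support h) := by
    rw [ENNReal.ofReal_inv_of_pos (sn_pos n)]
    exact m0_supp_Rop hh.1 n
  have hne : ENNReal.ofReal ((sn n)⁻¹) * m0 (Function.support h) ≠ ⊤ :=
    ENNReal.mul_ne_top ENNReal.ofReal_ne_top hh.2.ne
  refine ⟨⟨measurable_Rop hh.1 n, lt_of_le_of_lt hkey (lt_top_iff_ne_top.2 hne)⟩, ?_⟩
  calc L0Norm (Rop n h)
      ≤ (ENNReal.ofReal ((sn n)⁻¹) * m0 (Function.support h)).toReal :=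
        ENNReal.toReal_mono hne hkey
    _ = (sn n)⁻¹ * L0Norm h := by
        rw [ENNReal.toReal_mul, ENNReal.toReal_ofReal (inv_nonneg.2 (sn_pos n).le)]
        rfl

lemma Rop_bounded_Lp {p : ℝ} (hp : 0 < p) (n : ℕ) :
    BoundedWith (Rop n) (LpS p) (LpNorm p) (((sn n)⁻¹) ^ (1/p)) := by
  intro h hh
  have hkey : ∫⁻ x, ENNReal.ofReal (|Rop n h x| ^ p) ∂m0 ≤
      ENNReal.ofReal ((sn n)⁻¹) * ∫⁻ u, ENNReal.ofReal (|h u| ^ p) ∂m0 := by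
    rw [ENNReal.ofReal_inv_of_pos (sn_pos n)]
    exact lint_Rop hh.1 n p
  have hne : ENNReal.ofReal ((sn n)⁻¹) * ∫⁻ u, ENNReal.ofReal (|h u| ^ p) ∂m0 ≠ ⊤ :=
    ENNReal.mul_ne_top ENNReal.ofReal_ne_top hh.2.ne
  refine ⟨⟨measurable_Rop hh.1 n, lt_of_le_of_lt hkey (lt_top_iff_ne_top.2 hne)⟩, ?_⟩
  rw [LpNorm, LpNorm]
  calc ((∫⁻ x, ENNReal.ofReal (|Rop n h x| ^ p) ∂m0) ^ (1/p)).toReal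
      ≤ ((ENNReal.ofReal ((sn n)⁻¹) * ∫⁻ u, ENNReal.ofReal (|h u| ^ p) ∂m0) ^ (1/p)).toReal := by
        apply ENNReal.toReal_mono
        · exact ENNReal.rpow_ne_top_of_nonneg (by positivity) hne
        · exact ENNReal.rpow_le_rpow hkey (by positivity)
    _ = ((sn n)⁻¹) ^ (1/p) * ((∫⁻ u, ENNReal.ofReal (|h u| ^ p) ∂m0) ^ (1/p)).toReal := by
        rw [ENNReal.mul_rpow_of_nonneg _ _ (by positivity : (0:ℝ) ≤ 1/p), ENNReal.toReal_mul,
          ENNReal.ofReal_rpow_of_pos (inv_pos.2 (sn_pos n)),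
          ENNReal.toReal_ofReal (Real.rpow_nonneg (inv_nonneg.2 (sn_pos n).le) _)]

lemma Rop_bounded_Linfty (n : ℕ) : BoundedWith (Rop n) LinftyS LinftyNorm 1 := by
  intro h hh
  have hae : ∀ᵐ x ∂m0, |Rop n h x| ≤ LinftyNorm h := ae_Rop (linfty_ae_bound hh) n
  refine ⟨⟨measurable_Rop hh.1 n, LinftyNorm h, hae⟩, ?_⟩
  rw [one_mul]
  exact linfty_norm_le ENNReal.toReal_nonneg hae

lemma Tgen_bounded_Lq {q : ℝ≥0∞} (hq : 0 < q) {Ts : ℕ → (ℝ → ℝ) → ℝ → ℝ}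
    (hTs : ∀ n, BoundedWith (Ts n) (LqS q) (LqNorm q) 1) :
    BoundedWith (Tgen Ts) (LqS q) (LqNorm q) 1 := by
  rcases eq_or_ne q ⊤ with h | h
  · subst h
    rw [LqS, LqNorm, if_pos rfl, if_pos rfl] at hTs ⊢
    exact Tgen_bounded_Linfty hTs
  · rw [LqS, LqNorm, if_neg h, if_neg h] at hTs ⊢
    exact Tgen_bounded_Lp (ENNReal.toReal_pos hq.ne' h) hTs

lemma Rop_bounded_Lq {q : ℝ≥0∞} (hq : 0 < q) (n : ℕ) :
    ∃ M : ℝ, 0 ≤ M ∧ BoundedWith (Rop n) (LqS q) (LqNorm q) M := by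
  rcases eq_or_ne q ⊤ with h | h
  · subst h
    rw [LqS, LqNorm, if_pos rfl, if_pos rfl]
    exact ⟨1, zero_le_one, Rop_bounded_Linfty n⟩
  · rw [LqS, LqNorm, if_neg h, if_neg h]
    exact ⟨((sn n)⁻¹) ^ (1/q.toReal), Real.rpow_nonneg (inv_nonneg.2 (sn_pos n).le) _,
      Rop_bounded_Lp (ENNReal.toReal_pos hq.ne' h) n⟩

/-! ### Linearity and mapping properties -/

lemma Rop_linear (n : ℕ) (S : Set (ℝ → ℝ)) : IsLinearOn (Rop n) S := by
  constructor
  · intro f _ g _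
    funext x
    simp [Rop, Pi.add_apply]
  · intro c f _
    funext x
    simp [Rop, Pi.smul_apply]

lemma Rop_maps {q : ℝ≥0∞} (hq : 0 < q) (n : ℕ) :
    ∀ f ∈ sumSet L0S (LqS q), Rop n f ∈ sumSet L0S (LqS q) := by
  rintro f ⟨g, hg, h, hh, rfl⟩
  obtain ⟨Mq, hMq0, hMq⟩ := Rop_bounded_Lq hq n
  refine ⟨Rop n g, (Rop_bounded_L0 n g hg).1, Rop n h, (hMq h hh).1, ?_⟩
  funext x
  simp [Rop, Pi.add_apply]

lemma Tgen_add {q : ℝ≥0∞} {Ts : ℕ → (ℝ → ℝ) → ℝ → ℝ}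
    (hTs : ∀ n, IsLinearOn (Ts n) (sumSet L0S (LqS q)))
    {f g : ℝ → ℝ} (hf : f ∈ sumSet L0S (LqS q)) (hg : g ∈ sumSet L0S (LqS q)) :
    Tgen Ts (f + g) = Tgen Ts f + Tgen Ts g := by
  funext y
  have h := (hTs (idx y)).1 f hf g hg
  simp only [Tgen, h, Pi.add_apply]

lemma Tgen_smul {q : ℝ≥0∞} {Ts : ℕ → (ℝ → ℝ) → ℝ → ℝ}
    (hTs : ∀ n, IsLinearOn (Ts n) (sumSet L0S (LqS q)))
    (c : ℝ) {f : ℝ → ℝ} (hf : f ∈ sumSet L0S (LqS q)) :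
    Tgen Ts (c • f) = c • Tgen Ts f := by
  funext y
  have h := (hTs (idx y)).2 c f hf
  simp only [Tgen, h, Pi.smul_apply]

lemma Tgen_linear {q : ℝ≥0∞} {Ts : ℕ → (ℝ → ℝ) → ℝ → ℝ}
    (hTs : ∀ n, IsLinearOn (Ts n) (sumSet L0S (LqS q))) :
    IsLinearOn (Tgen Ts) (sumSet L0S (LqS q)) :=
  ⟨fun f hf g hg => Tgen_add hTs hf hg, fun c f hf => Tgen_smul hTs c hf⟩

lemma Tgen_maps {q : ℝ≥0∞} (hq : 0 < q) {Ts : ℕ → (ℝ → ℝ) → ℝ → ℝ}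
    (hTs : ∀ n, IsLinearOn (Ts n) (sumSet L0S (LqS q)))
    (hTs0 : ∀ n, BoundedWith (Ts n) L0S L0Norm 1)
    (hTsq : ∀ n, BoundedWith (Ts n) (LqS q) (LqNorm q) 1) :
    ∀ f ∈ sumSet L0S (LqS q), Tgen Ts f ∈ sumSet L0S (LqS q) := by
  rintro f ⟨g, hg, h, hh, rfl⟩
  have hadd : Tgen Ts (g + h) = Tgen Ts g + Tgen Ts h :=
    Tgen_add hTs (L0S_subset_sumSet hq hg) (LqS_subset_sumSet hh)
  rw [hadd]
  exact ⟨Tgen Ts g, (Tgen_bounded_L0 hTs0 g hg).1,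
    Tgen Ts h, (Tgen_bounded_Lq hq hTsq h hh).1, rfl⟩

end CSZ6

open CSZ MeasureTheory ENNReal Set in
/-- Theorem 3.1 of the paper.
Let `E` be a quasi-Banach function space on `(0,∞)` and `q ∈ (0,∞]`. If `E` is an
interpolation space for the couple `(L_0, L_q)`, then there is a constant `c > 0` such that
every linear operator `T` which is a contraction on `(L_0, L_q)` satisfies `‖T‖_{E→E} ≤ c`. -/
theorem statement6 (q : ℝ≥0∞) (hq : 0 < q) (E : QBFS)
    (hE : IsInterpolation L0S (LqS q) L0Norm (LqNorm q) E.carrier E.qnorm) :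
    ∃ c : ℝ, 0 < c ∧
      ∀ T : (ℝ → ℝ) → (ℝ → ℝ),
        IsLinearOn T (sumSet L0S (LqS q)) →
        (∀ f ∈ sumSet L0S (LqS q), T f ∈ sumSet L0S (LqS q)) →
        BoundedWith T L0S L0Norm 1 →
        BoundedWith T (LqS q) (LqNorm q) 1 →
        BoundedWith T E.carrier E.qnorm c := by
  by_contra hcon
  push_neg at hcon
  -- bounds for the extraction operators on `E`, from the interpolation property
  have hRE : ∀ n : ℕ, ∃ M : ℝ, 0 ≤ M ∧ BoundedWith (CSZ6.Rop n) E.carrier E.qnorm M := by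
    intro n
    obtain ⟨Mq, hMq0, hMq⟩ := CSZ6.Rop_bounded_Lq hq n
    exact hE.2.2 (CSZ6.Rop n) (CSZ6.Rop_linear n _) (CSZ6.Rop_maps hq n)
      ⟨(CSZ6.sn n)⁻¹, inv_nonneg.2 (CSZ6.sn_pos n).le, CSZ6.Rop_bounded_L0 n⟩
      ⟨Mq, hMq0, hMq⟩
  choose Mr hMr0 hMrE using hRE
  -- choose bad contractions
  have hsel : ∀ n : ℕ, ∃ T : (ℝ → ℝ) → (ℝ → ℝ),
      IsLinearOn T (sumSet L0S (LqS q)) ∧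
      (∀ f ∈ sumSet L0S (LqS q), T f ∈ sumSet L0S (LqS q)) ∧
      BoundedWith T L0S L0Norm 1 ∧
      BoundedWith T (LqS q) (LqNorm q) 1 ∧
      ¬ BoundedWith T E.carrier E.qnorm (((n:ℝ)+1) * (Mr n + 1)) := by
    intro n
    have hcn : 0 < ((n:ℝ)+1) * (Mr n + 1) := by
      have := hMr0 n
      positivity
    exact hcon _ hcn
  choose Ts hlin hmaps hb0 hbq hnb using hsel
  -- the glued operator
  obtain ⟨M, hM0, hbE⟩ := hE.2.2 (CSZ6.Tgen Ts) (CSZ6.Tgen_linear hlin)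
    (CSZ6.Tgen_maps hq hlin hb0 hbq)
    ⟨1, zero_le_one, CSZ6.Tgen_bounded_L0 hb0⟩
    ⟨1, zero_le_one, CSZ6.Tgen_bounded_Lq hq hbq⟩
  set n := ⌈M⌉₊ with hn
  have hnb' := hnb n
  rw [BoundedWith] at hnb'
  push_neg at hnb'
  obtain ⟨f, hfE, hbad⟩ := hnb'
  have h1 := hbE f hfE
  have h2 := hMrE n (CSZ6.Tgen Ts f) h1.1
  rw [CSZ6.Rop_Tgen] at h2
  have hMle : M ≤ (n:ℝ) + 1 := (Nat.le_ceil M).trans (by exact_mod_cast Nat.le_succ n)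
  have hfinal : E.qnorm (Ts n f) ≤ ((n:ℝ)+1) * (Mr n + 1) * E.qnorm f := by
    have hstep : Mr n * M ≤ ((n:ℝ)+1) * (Mr n + 1) := by nlinarith [hMr0 n, hM0, hMle]
    calc E.qnorm (Ts n f) ≤ Mr n * E.qnorm (CSZ6.Tgen Ts f) := h2.2
      _ ≤ Mr n * (M * E.qnorm f) :=
          mul_le_mul_of_nonneg_left h1.2 (hMr0 n)
      _ = (Mr n * M) * E.qnorm f := by ring
      _ ≤ ((n:ℝ)+1) * (Mr n + 1) * E.qnorm f :=
          mul_le_mul_of_nonneg_right hstep (E.qnorm_nonneg f)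
  have := hbad h2.1
  exact absurd hfinal (not_le.2 this)
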